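/- Let a, k, m be positive integers with gcd(a,k)=1 and let a_j = jk + a for 0 ≤ j ≤ m. Then there exists an integer y with a·y ≡ 1 (mod k) such that for all real t, exp(2πi/k)·γ_a(t) = γ_a(t + y/k). In particular, the image of γ_a is invariant under rotation by angle 2π/k about the origin. -/

import Mathlib

open Complex Finset

theorem gamma_rotation_invariance (a k m : ℕ) (ha : 0 < a) (hk : 0 < k) (hm : 0 < m)
    (hcop : Nat.gcd a k = 1) :
    ∃ y : ℤ, (a : ℤ) * y ≡ 1 [ZMOD k] ∧
      ∀ t : ℝ,
        Complex.exp (2 * Real.pi * Complex.I / (k : ℂ)) *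
          (∑ j ∈ Finset.range (m + 1),
            Complex.exp (2 * Real.pi * Complex.I * ((j * k + a : ℕ) : ℂ) * (t : ℂ))) =
        ∑ j ∈ Finset.range (m + 1),
          Complex.exp (2 * Real.pi * Complex.I * ((j * k + a : ℕ) : ℂ) * ((t : ℂ) + (y : ℂ) / (k : ℂ))) := by
  obtain ⟨y, c, h⟩ : ∃ y c : ℤ, (a : ℤ) * y = 1 + k * c := by
    have hb := Nat.gcd_eq_gcd_ab a k
    refine ⟨Nat.gcdA a k, -(Nat.gcdB a k), ?_⟩
    rw [hcop] at hb
    push_cast at hb ⊢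
    linarith
  have hk0 : (k : ℂ) ≠ 0 := Nat.cast_ne_zero.mpr hk.ne'
  have hC : (a : ℂ) * y = 1 + k * c := by exact_mod_cast h
  refine ⟨y, ?_, ?_⟩
  · exact (Int.modEq_iff_dvd.mpr ⟨c, by linear_combination h⟩).symm
  · intro t
    rw [Finset.mul_sum]
    refine Finset.sum_congr rfl fun j _ => ?_
    have key : 2 * Real.pi * Complex.I * ((j * k + a : ℕ) : ℂ) * ((t : ℂ) + (y : ℂ) / (k : ℂ))
        = (2 * Real.pi * Complex.I / (k : ℂ) + 2 * Real.pi * Complex.I * ((j * k + a : ℕ) : ℂ) * (t : ℂ))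
          + ((j * y + c : ℤ) : ℂ) * (2 * Real.pi * Complex.I) := by
      push_cast
      field_simp
      ring_nf
      linear_combination hC
    rw [key, Complex.exp_add, Complex.exp_add, Complex.exp_int_mul_two_pi_mul_I, mul_one]
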